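/- arXiv:2212.06520 — 2 statements merged into one kernel-verified Lean document; each statement's English description precedes it below -/
import Mathlib

section
/- First derivative test: let $a < b$ be reals and let $g : [a,b] \to \mathbb{R}$ be differentiable with $g'$ monotone on $[a,b]$ and $|g'(x)| \geq \lambda > 0$ for all $x \in [a,b]$. Then $\left| \int_a^b e^{2\pi i g(x)}\, dx \right| \leq \frac{1}{\pi \lambda}$. -/
open Real intervalIntegral

open MeasureTheory Set



lemma lemA {a b C : ℝ} {f : ℝ → ℂ} (hC : 0 ≤ C)
    (hIab : ∀ α β, α ∈ Icc a b → β ∈ Icc a b → α ≤ β → ‖∫ x in Ioo α β, f x‖ ≤ C)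
    {S : Set ℝ} (hS : S.OrdConnected) (hsub : S ⊆ Icc a b) :
    ‖∫ x in S, f x‖ ≤ C := by
  rcases S.eq_empty_or_nonempty with rfl | hne
  · simpa using hC
  have hbb : BddBelow S := ⟨a, fun x hx => (hsub hx).1⟩
  have hba : BddAbove S := ⟨b, fun x hx => (hsub hx).2⟩
  set α := sInf S with hα
  set β := sSup S with hβ
  obtain ⟨x₀, hx₀⟩ := hne
  have hαm : α ∈ Icc a b := ⟨le_csInf ⟨x₀, hx₀⟩ fun x hx => (hsub hx).1,
    le_trans (csInf_le hbb hx₀) (hsub hx₀).2⟩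
  have hβm : β ∈ Icc a b := ⟨le_trans (hsub hx₀).1 (le_csSup hba hx₀),
    csSup_le ⟨x₀, hx₀⟩ fun x hx => (hsub hx).2⟩
  have hαβ : α ≤ β := le_trans (csInf_le hbb hx₀) (le_csSup hba hx₀)
  have hsub2 : Ioo α β ⊆ S := by
    intro y hy
    obtain ⟨u, hu, hu'⟩ := (csInf_lt_iff hbb ⟨x₀, hx₀⟩).1 hy.1
    obtain ⟨v, hv, hv'⟩ := (lt_csSup_iff hba ⟨x₀, hx₀⟩).1 hy.2
    exact hS.out hu hv ⟨hu'.le, hv'.le⟩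
  have haeeq : S =ᵐ[volume] Ioo α β := by
    rw [MeasureTheory.ae_eq_set]
    constructor
    · refine measure_mono_null (fun x hx => ?_) (Set.Countable.measure_zero
        ((Set.countable_singleton β).insert α) volume)
      rcases hx with ⟨hxS, hxI⟩
      have h1 : α ≤ x := csInf_le hbb hxS
      have h2 : x ≤ β := le_csSup hba hxS
      simp only [mem_Ioo, not_and_or, not_lt] at hxI
      rcases hxI with h | h
      · exact Set.mem_insert_iff.2 (Or.inl (le_antisymm h h1))
      · exact Set.mem_insert_iff.2 (Or.inr (Set.mem_singleton_iff.2 (le_antisymm h2 h)))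
    · simp [Set.diff_eq_empty.2 hsub2]
  rw [setIntegral_congr_set haeeq]
  exact hIab α β hαm hβm hαβ

lemma phi_deriv {g g' : ℝ → ℝ} {x : ℝ} (h : HasDerivAt g (g' x) x) :
    HasDerivAt (fun y => Complex.exp (2*Real.pi*Complex.I*(g y)) / (2*Real.pi*Complex.I))
      (Complex.exp (2*Real.pi*Complex.I*(g x)) * (g' x)) x := by
  have h1 : HasDerivAt (fun y => ((g y : ℂ))) ((g' x : ℂ)) x := h.ofReal_comp
  have h2 := ((h1.const_mul (2*Real.pi*Complex.I)).cexp).div_const (2*Real.pi*Complex.I)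
  convert h2 using 1
  have hne : (2*Real.pi*Complex.I) ≠ 0 := by
    simp [Real.pi_ne_zero, Complex.I_ne_zero]
  · rfl
  rw [eq_div_iff (by simp [Real.pi_ne_zero, Complex.I_ne_zero])]; ring

lemma norm_e (t : ℝ) : ‖Complex.exp (2 * Real.pi * Complex.I * t)‖ = 1 := by
  rw [Complex.norm_exp]; simp

lemma main_pos (a b : ℝ) (hab : a < b) (g g' : ℝ → ℝ) (lam : ℝ)
    (hlam : 0 < lam)
    (hderiv : ∀ x ∈ Set.Icc a b, HasDerivAt g (g' x) x)
    (hmono : MonotoneOn g' (Set.Icc a b) ∨ AntitoneOn g' (Set.Icc a b))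
    (hpos : ∀ x ∈ Set.Icc a b, lam ≤ g' x) :
    ‖∫ x in a..b, Complex.exp (2 * Real.pi * Complex.I * (g x))‖
      ≤ 1 / (Real.pi * lam) := by
  -- clamp
  set c : ℝ → ℝ := fun x => (Set.projIcc a b hab.le x : ℝ) with hc
  have hcmem : ∀ x, c x ∈ Icc a b := fun x => (Set.projIcc a b hab.le x).2
  have hcid : ∀ x ∈ Icc a b, c x = x := fun x hx => by
    simp [hc, Set.projIcc_of_mem hab.le hx]
  have hcmono : Monotone c := fun x y h => Set.monotone_projIcc hab.le h
  have hccont : Continuous c := continuous_induced_dom.comp continuous_projIcc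
  set G : ℝ → ℝ := fun x => g (c x) with hG
  set G' : ℝ → ℝ := fun x => g' (c x) with hG'
  set e : ℝ → ℂ := fun x => Complex.exp (2*Real.pi*Complex.I*(G x)) with he
  set ψ : ℝ → ℝ := fun x => (G' x)⁻¹ with hψ
  have hG'pos : ∀ x, lam ≤ G' x := fun x => hpos _ (hcmem x)
  have hG'pos' : ∀ x, 0 < G' x := fun x => lt_of_lt_of_le hlam (hG'pos x)
  -- continuity of G, e
  have hgcont : ContinuousOn g (Icc a b) :=
    fun x hx => (hderiv x hx).continuousAt.continuousWithinAt
  have hGcont : Continuous G := hgcont.comp_continuous hccont hcmem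
  have hecont : Continuous e := by
    exact Complex.continuous_exp.comp (by continuity)
  -- measurability of G', ψ
  have hG'meas : Measurable G' := by
    rcases hmono with hm | hm
    · exact Monotone.measurable (fun x y h => hm (hcmem x) (hcmem y) (hcmono h))
    · exact Antitone.measurable (fun x y h => hm (hcmem x) (hcmem y) (hcmono h))
  have hψmeas : Measurable ψ := hG'meas.inv
  have hψord : ∀ s : ℝ, OrdConnected {x | s < ψ x} := by
    intro s
    rcases hmono with hm | hm
    · have : Antitone ψ := fun x y h => by
        exact inv_anti₀ (hG'pos' x) (hm (hcmem x) (hcmem y) (hcmono h))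
      exact ⟨fun x hx z hz y hy => lt_of_lt_of_le hz (this hy.2)⟩
    · have : Monotone ψ := fun x y h => by
        exact inv_anti₀ (hG'pos' y) (hm (hcmem x) (hcmem y) (hcmono h))
      exact ⟨fun x hx z hz y hy => lt_of_lt_of_le hx (this hy.1)⟩
  have hψpos : ∀ x, 0 < ψ x := fun x => inv_pos.2 (hG'pos' x)
  have hψle : ∀ x, ψ x ≤ lam⁻¹ := fun x => inv_anti₀ hlam (hG'pos x)
  -- bound on G'
  set M : ℝ := max (g' a) (g' b) with hM
  have hG'le : ∀ x, |G' x| ≤ M := by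
    intro x
    rw [abs_of_pos (hG'pos' x)]
    rcases hmono with hm | hm
    · exact le_trans (hm (hcmem x) (right_mem_Icc.2 hab.le) (hcmem x).2) (le_max_right _ _)
    · exact le_trans (hm (left_mem_Icc.2 hab.le) (hcmem x) (hcmem x).1) (le_max_left _ _)
  have hM0 : 0 < M := lt_of_lt_of_le (hG'pos' a) (le_trans (le_abs_self _) (hG'le a))
  have henorm : ∀ x, ‖e x‖ = 1 := fun x => norm_e (G x)
  have heG'norm : ∀ x, ‖e x * (G' x : ℂ)‖ ≤ M := by
    intro x
    rw [norm_mul, henorm, one_mul, Complex.norm_real, Real.norm_eq_abs]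
    exact hG'le x
  -- the double integrand
  set U : Set (ℝ×ℝ) := {p | p.2 < ψ p.1} with hU
  have hUm : MeasurableSet U := measurableSet_lt measurable_snd (hψmeas.comp measurable_fst)
  set K : ℝ×ℝ → ℂ := U.indicator (fun p => e p.1 * (G' p.1 : ℂ)) with hK
  haveI f1 : IsFiniteMeasure (volume.restrict (Ioc a b)) :=
    ⟨by rw [Measure.restrict_apply_univ]; exact measure_Ioc_lt_top⟩
  haveI f2 : IsFiniteMeasure (volume.restrict (Ioo (0:ℝ) lam⁻¹)) :=
    ⟨by rw [Measure.restrict_apply_univ]; exact measure_Ioo_lt_top⟩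
  have hKmeas : AEStronglyMeasurable K
      ((volume.restrict (Ioc a b)).prod (volume.restrict (Ioo (0:ℝ) lam⁻¹))) := by
    refine AEStronglyMeasurable.indicator ?_ hUm
    exact ((hecont.comp continuous_fst).aestronglyMeasurable.mul
      ((Complex.measurable_ofReal.comp (hG'meas.comp measurable_fst)).aestronglyMeasurable))
  have hKnorm : ∀ p : ℝ×ℝ, ‖K p‖ ≤ M := by
    intro p
    rw [hK]
    exact le_trans (norm_indicator_le_norm_self _ _) (heG'norm p.1)
  have hKint : Integrable K
      ((volume.restrict (Ioc a b)).prod (volume.restrict (Ioo (0:ℝ) lam⁻¹))) :=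
    (integrable_const M).mono' hKmeas (Filter.Eventually.of_forall hKnorm)
  have hswap : (∫ x in Ioc a b, ∫ s in Ioo (0:ℝ) lam⁻¹, K (x, s))
      = ∫ s in Ioo (0:ℝ) lam⁻¹, ∫ x in Ioc a b, K (x, s) :=
    MeasureTheory.integral_integral_swap (f := fun x s => K (x, s)) (by exact hKint)
  -- pointwise layer-cake identity
  have key1 : ∀ x : ℝ, (∫ s in Ioo (0:ℝ) lam⁻¹, K (x, s)) = e x := by
    intro x
    have h1 : (fun s => K (x, s)) = (Iio (ψ x)).indicator (fun _ => e x * (G' x:ℂ)) := by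
      funext s
      simp only [hK, Set.indicator_apply, hU, Set.mem_setOf_eq, Set.mem_Iio]
    have h2 : Ioo (0:ℝ) lam⁻¹ ∩ Iio (ψ x) = Ioo 0 (ψ x) := by
      ext s
      simp only [mem_inter_iff, mem_Ioo, mem_Iio]
      constructor
      · rintro ⟨⟨hs1, _⟩, hs3⟩; exact ⟨hs1, hs3⟩
      · rintro ⟨hs1, hs3⟩; exact ⟨⟨hs1, lt_of_lt_of_le hs3 (hψle x)⟩, hs3⟩
    rw [h1, setIntegral_indicator measurableSet_Iio, h2, setIntegral_const, Real.volume_real_Ioo_of_le (hψpos x).le,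
      sub_zero, Complex.real_smul]
    have hne : ((G' x : ℂ)) ≠ 0 := by exact_mod_cast (hG'pos' x).ne'
    rw [hψ]
    push_cast
    field_simp
  -- inner integral bound
  have inner_bound : ∀ s : ℝ, ‖∫ x in Ioc a b, K (x, s)‖ ≤ 1/Real.pi := by
    intro s
    have h1 : (fun x => K (x, s)) = ({x : ℝ | s < ψ x}).indicator (fun x => e x * (G' x:ℂ)) := by
      funext x
      simp only [hK, Set.indicator_apply, hU, Set.mem_setOf_eq]
    have hTm : MeasurableSet {x : ℝ | s < ψ x} := hψmeas measurableSet_Ioi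
    rw [h1, setIntegral_indicator hTm]
    have hpi : (0:ℝ) ≤ 1/Real.pi := by positivity
    have hIab : ∀ α β, α ∈ Icc a b → β ∈ Icc a b → α ≤ β →
        ‖∫ x in Ioo α β, e x * (G' x:ℂ)‖ ≤ 1/Real.pi := by
      intro α β hα hβ hαβ
      have hsub3 : Icc α β ⊆ Icc a b := Icc_subset_Icc hα.1 hβ.2
      have hint : IntegrableOn (fun x => e x * (G' x:ℂ)) (Ioo α β) := by
        haveI : IsFiniteMeasure (volume.restrict (Ioo α β)) :=
          ⟨by rw [Measure.restrict_apply_univ]; exact measure_Ioo_lt_top⟩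
        refine (integrable_const M).mono' ?_ (Filter.Eventually.of_forall fun x => heG'norm x)
        exact (hecont.aestronglyMeasurable.mul
          (Complex.measurable_ofReal.comp hG'meas).aestronglyMeasurable).restrict
      have heq : (∫ x in Ioo α β, e x * (G' x:ℂ))
          = ∫ x in Ioo α β, Complex.exp (2*Real.pi*Complex.I*(g x)) * (g' x : ℂ) := by
        refine setIntegral_congr_fun measurableSet_Ioo (fun x hx => ?_)
        have hx' : x ∈ Icc a b := hsub3 (Ioo_subset_Icc_self hx)
        simp [he, hG, hG', hcid x hx']
      have hFTC : (∫ x in α..β, Complex.exp (2*Real.pi*Complex.I*(g x)) * (g' x:ℂ))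
          = Complex.exp (2*Real.pi*Complex.I*(g β))/(2*Real.pi*Complex.I)
            - Complex.exp (2*Real.pi*Complex.I*(g α))/(2*Real.pi*Complex.I) := by
        refine intervalIntegral.integral_eq_sub_of_hasDerivAt
          (f := fun y => Complex.exp (2*Real.pi*Complex.I*(g y)) / (2*Real.pi*Complex.I))
          (fun x hx => ?_) ?_
        · exact phi_deriv (hderiv x (hsub3 (by rwa [uIcc_of_le hαβ] at hx)))
        · rw [intervalIntegrable_iff_integrableOn_Ioo_of_le hαβ]
          refine IntegrableOn.congr_fun hint (fun x hx => ?_) measurableSet_Ioo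
          have hx' : x ∈ Icc a b := hsub3 (Ioo_subset_Icc_self hx)
          simp [he, hG, hG', hcid x hx']
      have hIoo : (∫ x in Ioo α β, Complex.exp (2*Real.pi*Complex.I*(g x)) * (g' x:ℂ))
          = ∫ x in α..β, Complex.exp (2*Real.pi*Complex.I*(g x)) * (g' x:ℂ) := by
        rw [intervalIntegral.integral_of_le hαβ, integral_Ioc_eq_integral_Ioo]
      rw [heq, hIoo, hFTC]
      have hnorm2pi : ‖(2*Real.pi*Complex.I : ℂ)‖ = 2*Real.pi := by
        simp [norm_mul, Complex.norm_I, Complex.norm_real, Real.norm_eq_abs,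
          abs_of_pos Real.pi_pos]
      have h3 : ∀ t : ℝ, ‖Complex.exp (2*Real.pi*Complex.I*(t:ℂ))/(2*Real.pi*Complex.I)‖
          = 1/(2*Real.pi) := by
        intro t
        rw [norm_div, norm_e, hnorm2pi]
      refine le_trans (norm_sub_le _ _) ?_
      rw [h3, h3, ← add_div]
      have h4 : (1+1:ℝ)/(2*Real.pi) = 1/Real.pi := by
        rw [div_eq_div_iff (by positivity) Real.pi_pos.ne']
        ring
      rw [h4]
    exact lemA hpi hIab ((ordConnected_Ioc).inter (hψord s))
      (le_trans (inter_subset_left) Ioc_subset_Icc_self)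
  -- assemble
  have hLHS : (∫ x in a..b, Complex.exp (2 * Real.pi * Complex.I * (g x)))
      = ∫ x in Ioc a b, e x := by
    rw [intervalIntegral.integral_of_le hab.le]
    refine setIntegral_congr_fun measurableSet_Ioc (fun x hx => ?_)
    simp [he, hG, hcid x (Ioc_subset_Icc_self hx)]
  have hmid : (∫ x in Ioc a b, e x) = ∫ s in Ioo (0:ℝ) lam⁻¹, ∫ x in Ioc a b, K (x, s) := by
    rw [← hswap]
    exact (setIntegral_congr_fun measurableSet_Ioc (fun x _ => (key1 x).symm))
  rw [hLHS, hmid]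
  have hfin : volume (Ioo (0:ℝ) lam⁻¹) < ⊤ := measure_Ioo_lt_top
  refine le_trans (norm_setIntegral_le_of_norm_le_const hfin
    (fun s _ => inner_bound s)) ?_
  have hfe : 1/Real.pi * lam⁻¹ = 1/(Real.pi*lam) := by
    field_simp
  rw [Real.volume_real_Ioo_of_le (by positivity), sub_zero, hfe]

theorem first_derivative_test (a b : ℝ) (hab : a < b) (g g' : ℝ → ℝ) (lam : ℝ)
    (hlam : 0 < lam)
    (hderiv : ∀ x ∈ Set.Icc a b, HasDerivAt g (g' x) x)
    (hmono : MonotoneOn g' (Set.Icc a b) ∨ AntitoneOn g' (Set.Icc a b))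
    (hlow : ∀ x ∈ Set.Icc a b, lam ≤ |g' x|) :
    ‖∫ x in a..b, Complex.exp (2 * Real.pi * Complex.I * (g x))‖
      ≤ 1 / (Real.pi * lam) := by
  have hsplit : ∀ x ∈ Icc a b, lam ≤ g' x ∨ g' x ≤ -lam := by
    intro x hx
    rcases abs_cases (g' x) with ⟨h1, _⟩ | ⟨h1, _⟩
    · exact Or.inl (h1 ▸ hlow x hx)
    · exact Or.inr (by linarith [hlow x hx, h1])
  have hdich : (∀ x ∈ Icc a b, lam ≤ g' x) ∨ (∀ x ∈ Icc a b, lam ≤ -g' x) := by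
    by_contra h
    push_neg at h
    obtain ⟨⟨x, hx, hx'⟩, ⟨y, hy, hy'⟩⟩ := h
    have hgx : g' x ≤ -lam := by
      rcases hsplit x hx with h | h
      · linarith
      · exact h
    have hgy : lam ≤ g' y := by
      rcases hsplit y hy with h | h
      · exact h
      · linarith
    have hxy : x ≠ y := by
      intro h; rw [h] at hgx; linarith
    rcases lt_or_gt_of_ne hxy with hlt | hlt
    · have hsub : Icc x y ⊆ Icc a b := Icc_subset_Icc hx.1 hy.2
      obtain ⟨z, hz, hz'⟩ := exists_hasDerivWithinAt_eq_of_gt_of_lt hlt.le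
        (fun w hw => (hderiv w (hsub hw)).hasDerivWithinAt) (m := 0)
        (by linarith) (by linarith)
      have := hlow z (hsub (Ioo_subset_Icc_self hz))
      rw [hz'] at this; simp at this; linarith
    · have hsub : Icc y x ⊆ Icc a b := Icc_subset_Icc hy.1 hx.2
      obtain ⟨z, hz, hz'⟩ := exists_hasDerivWithinAt_eq_of_lt_of_gt hlt.le
        (fun w hw => (hderiv w (hsub hw)).hasDerivWithinAt) (m := 0)
        (by linarith) (by linarith)
      have := hlow z (hsub (Ioo_subset_Icc_self hz))
      rw [hz'] at this; simp at this; linarith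
  rcases hdich with hpos | hneg
  · exact main_pos a b hab g g' lam hlam hderiv hmono hpos
  · have hmono' : MonotoneOn (fun x => -g' x) (Icc a b) ∨ AntitoneOn (fun x => -g' x) (Icc a b) := by
      rcases hmono with hm | hm
      · exact Or.inr (fun x hx y hy h => neg_le_neg (hm hx hy h))
      · exact Or.inl (fun x hx y hy h => neg_le_neg (hm hx hy h))
    have hderiv' : ∀ x ∈ Icc a b, HasDerivAt (fun y => -g y) (-g' x) x :=
      fun x hx => (hderiv x hx).neg
    have hmain := main_pos a b hab (fun y => -g y) (fun y => -g' y) lam hlam hderiv' hmono' hneg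
    have hconj : ∀ x : ℝ, Complex.exp (2 * Real.pi * Complex.I * ((-g x : ℝ) : ℂ))
        = (starRingEnd ℂ) (Complex.exp (2 * Real.pi * Complex.I * (g x))) := by
      intro x
      have e1 : (2*(Real.pi:ℂ)*Complex.I*((g x:ℝ):ℂ)) = ((2*Real.pi*g x : ℝ):ℂ) * Complex.I := by
        push_cast; ring
      have e2 : (2*(Real.pi:ℂ)*Complex.I*((-g x:ℝ):ℂ))
          = ((-(2*Real.pi*g x) : ℝ):ℂ) * Complex.I := by
        push_cast; ring
      rw [← Complex.exp_conj, e1, e2, map_mul, Complex.conj_ofReal, Complex.conj_I]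
      congr 1
      push_cast
      ring
    calc ‖∫ x in a..b, Complex.exp (2 * Real.pi * Complex.I * (g x))‖
        = ‖(starRingEnd ℂ) (∫ x in a..b, Complex.exp (2 * Real.pi * Complex.I * (g x)))‖ := by
          rw [RCLike.norm_conj]
      _ = ‖∫ x in a..b, Complex.exp (2 * Real.pi * Complex.I * ((-g x : ℝ) : ℂ))‖ := by
          rw [intervalIntegral.integral_of_le hab.le, intervalIntegral.integral_of_le hab.le,
            ← integral_conj]
          congr 1
          exact setIntegral_congr_fun measurableSet_Ioc (fun x _ => (hconj x).symm)
      _ ≤ 1 / (Real.pi * lam) := hmain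
end

section
/- Second derivative test: let $a < b$ be reals and let $g : [a,b] \to \mathbb{R}$ be twice differentiable with $g''(x) \geq \rho > 0$ for all $x \in [a,b]$. Then $\left| \int_a^b e^{2\pi i g(x)}\, dx \right| \leq \frac{4}{\sqrt{\rho}}$. -/
open Real intervalIntegral MeasureTheory Set

lemma sdt_norm_exp (t : ℝ) : ‖Complex.exp (2 * Real.pi * Complex.I * (t : ℂ))‖ = 1 := by
  rw [Complex.norm_exp]
  simp [Complex.mul_re, Complex.mul_im]

lemma sdt_fdt (c d : ℝ) (hcd : c ≤ d) (g g' g'' : ℝ → ℝ) (δ : ℝ) (hδ : 0 < δ)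
    (hderiv : ∀ x ∈ Set.Icc c d, HasDerivAt g (g' x) x)
    (hderiv2 : ∀ x ∈ Set.Icc c d, HasDerivAt g' (g'' x) x)
    (h2 : ∀ x ∈ Set.Icc c d, 0 ≤ g'' x)
    (hlow : ∀ x ∈ Set.Icc c d, δ ≤ g' x) :
    ‖∫ x in c..d, Complex.exp (2 * Real.pi * Complex.I * (g x))‖
      ≤ 3 / (2 * Real.pi * δ) := by
  have hpi : (0:ℝ) < Real.pi := Real.pi_pos
  set K : ℂ := 2 * Real.pi * Complex.I with hK
  have hKne : K ≠ 0 := by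
    simp [hK, Complex.I_ne_zero, Real.pi_ne_zero]
  have huIcc : Set.uIcc c d = Set.Icc c d := Set.uIcc_of_le hcd
  have hg'pos : ∀ x ∈ Set.Icc c d, 0 < g' x := fun x hx => lt_of_lt_of_le hδ (hlow x hx)
  have hg'ne : ∀ x ∈ Set.Icc c d, (K * (g' x : ℂ)) ≠ 0 := by
    intro x hx
    exact mul_ne_zero hKne (by exact_mod_cast (hg'pos x hx).ne')
  set u : ℝ → ℂ := fun x => (K * (g' x : ℂ))⁻¹ with hu_def
  set v : ℝ → ℂ := fun x => Complex.exp (K * (g x : ℂ)) with hv_def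
  set v' : ℝ → ℂ := fun x => K * (g' x : ℂ) * Complex.exp (K * (g x : ℂ)) with hv'_def
  set φ : ℝ → ℝ := fun x => -(2 * Real.pi * g' x)⁻¹ with hφ_def
  set φ' : ℝ → ℝ := fun x => g'' x / (2 * Real.pi * (g' x)^2) with hφ'_def
  set u' : ℝ → ℂ := fun x => (φ' x : ℂ) * Complex.I with hu'_def
  have hg'cont : ContinuousOn g' (Set.Icc c d) :=
    fun x hx => (hderiv2 x hx).continuousAt.continuousWithinAt
  have hgcont : ContinuousOn g (Set.Icc c d) :=
    fun x hx => (hderiv x hx).continuousAt.continuousWithinAt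
  have hφderiv : ∀ x ∈ Set.Icc c d, HasDerivAt φ (φ' x) x := by
    intro x hx
    have hne : (2 * Real.pi * g' x) ≠ 0 := by
      have := hg'pos x hx; positivity
    have h1 : HasDerivAt (fun y => 2 * Real.pi * g' y) (2 * Real.pi * g'' x) x :=
      (hderiv2 x hx).const_mul _
    have h3 := (h1.inv hne).neg
    refine h3.congr_deriv (Eq.symm ?_)
    rw [hφ'_def]
    field_simp [Real.pi_ne_zero, (hg'pos x hx).ne']
  have hφ'nonneg : ∀ x ∈ Set.Icc c d, 0 ≤ φ' x := by
    intro x hx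
    have := (hg'pos x hx)
    have := h2 x hx
    positivity
  have hφcont : ContinuousOn φ (Set.Icc c d) := by
    apply ContinuousOn.neg
    apply ContinuousOn.inv₀ (continuousOn_const.mul hg'cont)
    intro x hx
    have := hg'pos x hx; show 2 * Real.pi * g' x ≠ 0; positivity
  have hIoosub : Set.Ioo (min c d) (max c d) ⊆ Set.Icc c d := by
    rw [min_eq_left hcd, max_eq_right hcd]; exact Set.Ioo_subset_Icc_self
  have hφ'int : IntervalIntegrable φ' volume c d := by
    apply intervalIntegrable_deriv_of_nonneg (g := φ)
    · rwa [huIcc]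
    · exact fun x hx => hφderiv x (hIoosub hx)
    · exact fun x hx => hφ'nonneg x (hIoosub hx)
  have hu'int : IntervalIntegrable u' volume c d := by
    have h : IntervalIntegrable (fun x => φ' x • (Complex.I)) volume c d :=
      ⟨hφ'int.1.smul_const _, hφ'int.2.smul_const _⟩
    simpa [hu'_def, Complex.real_smul] using h
  have hv'int : IntervalIntegrable v' volume c d := by
    apply ContinuousOn.intervalIntegrable
    rw [huIcc]
    exact (continuousOn_const.mul (Complex.continuous_ofReal.comp_continuousOn hg'cont)).mul
      (Complex.continuous_exp.comp_continuousOn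
        (continuousOn_const.mul (Complex.continuous_ofReal.comp_continuousOn hgcont)))
  have hu : ∀ x ∈ Set.uIcc c d, HasDerivAt u (u' x) x := by
    intro x hx
    rw [huIcc] at hx
    have hg0' : (g' x) ≠ 0 := (hg'pos x hx).ne'
    have h0 : HasDerivAt (fun y => (g' y)⁻¹) (-(g'' x)/(g' x)^2) x := (hderiv2 x hx).inv hg0'
    have h := (h0.ofReal_comp).const_mul K⁻¹
    have hfun : u = fun y => K⁻¹ * (((g' y)⁻¹ : ℝ) : ℂ) := by
      funext y
      rw [hu_def]
      push_cast
      rw [mul_inv]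
    rw [hfun]
    refine h.congr_deriv (Eq.symm ?_)
    have hg0 : (g' x : ℂ) ≠ 0 := by exact_mod_cast hg0'
    have hπ : (Real.pi : ℂ) ≠ 0 := by exact_mod_cast Real.pi_ne_zero
    rw [hu'_def, hφ'_def, hK]
    push_cast
    field_simp
    ring_nf
    simp [Complex.I_sq]
  have hv : ∀ x ∈ Set.uIcc c d, HasDerivAt v (v' x) x := by
    intro x hx
    rw [huIcc] at hx
    have h := (((hderiv x hx).ofReal_comp).const_mul K).cexp
    convert h using 1
    rw [hv'_def]; ring
  have key := integral_mul_deriv_eq_deriv_mul hu hv hu'int hv'int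
  have heq : (∫ x in c..d, Complex.exp (2 * Real.pi * Complex.I * (g x)))
      = ∫ x in c..d, u x * v' x := by
    apply intervalIntegral.integral_congr
    intro x hx
    rw [huIcc] at hx
    rw [hu_def, hv'_def]
    simp only
    rw [inv_mul_eq_div, mul_comm (K * (g' x:ℂ)), mul_div_assoc, div_self (hg'ne x hx), mul_one]
  -- norms of boundary terms
  have hvnorm : ∀ x, ‖v x‖ = 1 := fun x => sdt_norm_exp (g x)
  have hKnorm : ‖K‖ = 2 * Real.pi := by
    rw [hK]
    simp [norm_mul, Complex.norm_I, abs_of_pos hpi]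
  have hunorm : ∀ x ∈ Set.Icc c d, ‖u x‖ ≤ (2 * Real.pi * δ)⁻¹ := by
    intro x hx
    rw [hu_def]
    simp only [norm_inv, norm_mul, hKnorm, Complex.norm_real, Real.norm_eq_abs,
      abs_of_pos (hg'pos x hx)]
    apply inv_anti₀ (by positivity)
    have := hlow x hx
    nlinarith
  -- the integral term
  have hint_norm : ‖∫ x in c..d, u' x * v x‖ ≤ (2 * Real.pi * δ)⁻¹ := by
    have h1 : ‖∫ x in c..d, u' x * v x‖ ≤ ∫ x in c..d, ‖u' x * v x‖ :=
      intervalIntegral.norm_integral_le_integral_norm hcd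
    have h2' : (∫ x in c..d, ‖u' x * v x‖) = ∫ x in c..d, φ' x := by
      apply intervalIntegral.integral_congr
      intro x hx
      rw [huIcc] at hx
      show ‖u' x * v x‖ = φ' x
      rw [norm_mul, hvnorm, mul_one, hu'_def]
      simp [abs_of_nonneg (hφ'nonneg x hx)]
    have h3 : (∫ x in c..d, φ' x) = φ d - φ c := by
      apply intervalIntegral.integral_eq_sub_of_hasDerivAt
      · intro x hx; exact hφderiv x (by rwa [huIcc] at hx)
      · exact hφ'int
    have h4 : φ d - φ c ≤ (2 * Real.pi * δ)⁻¹ := by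
      rw [hφ_def]
      simp only
      have hc' := hg'pos c ⟨le_refl c, hcd⟩
      have hd' := hg'pos d ⟨hcd, le_refl d⟩
      have hcl := hlow c ⟨le_refl c, hcd⟩
      have h5 : (2 * Real.pi * g' c)⁻¹ ≤ (2 * Real.pi * δ)⁻¹ := by
        apply inv_anti₀ (by positivity); nlinarith
      have h6 : 0 ≤ (2 * Real.pi * g' d)⁻¹ := by positivity
      linarith
    calc ‖∫ x in c..d, u' x * v x‖ ≤ ∫ x in c..d, ‖u' x * v x‖ := h1
      _ = φ d - φ c := by rw [h2', h3]
      _ ≤ (2 * Real.pi * δ)⁻¹ := h4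
  have hcmem : c ∈ Set.Icc c d := ⟨le_refl c, hcd⟩
  have hdmem : d ∈ Set.Icc c d := ⟨hcd, le_refl d⟩
  calc ‖∫ x in c..d, Complex.exp (2 * Real.pi * Complex.I * (g x))‖
      = ‖u d * v d - u c * v c - ∫ x in c..d, u' x * v x‖ := by rw [heq, key]
    _ ≤ ‖u d * v d - u c * v c‖ + ‖∫ x in c..d, u' x * v x‖ := norm_sub_le _ _
    _ ≤ (‖u d * v d‖ + ‖u c * v c‖) + ‖∫ x in c..d, u' x * v x‖ := by
        gcongr; exact norm_sub_le _ _
    _ ≤ ((2 * Real.pi * δ)⁻¹ + (2 * Real.pi * δ)⁻¹) + (2 * Real.pi * δ)⁻¹ := by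
        gcongr
        · rw [norm_mul, hvnorm, mul_one]; exact hunorm d hdmem
        · rw [norm_mul, hvnorm, mul_one]; exact hunorm c hcmem
    _ = 3 / (2 * Real.pi * δ) := by field_simp; norm_num

theorem second_derivative_test (a b : ℝ) (hab : a < b) (g g' g'' : ℝ → ℝ) (ρ : ℝ)
    (hρ : 0 < ρ)
    (hderiv : ∀ x ∈ Set.Icc a b, HasDerivAt g (g' x) x)
    (hderiv2 : ∀ x ∈ Set.Icc a b, HasDerivAt g' (g'' x) x)
    (hlow : ∀ x ∈ Set.Icc a b, ρ ≤ g'' x) :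
    ‖∫ x in a..b, Complex.exp (2 * Real.pi * Complex.I * (g x))‖
      ≤ 4 / Real.sqrt ρ := by
  classical
  have hpi : (0:ℝ) < Real.pi := Real.pi_pos
  set s : ℝ := Real.sqrt ρ with hs_def
  have hs : 0 < s := Real.sqrt_pos.mpr hρ
  have hs2 : s ^ 2 = ρ := Real.sq_sqrt hρ.le
  set F : ℝ → ℂ := fun x => Complex.exp (2 * Real.pi * Complex.I * (g x)) with hF_def
  have hg'cont : ContinuousOn g' (Set.Icc a b) :=
    fun x hx => (hderiv2 x hx).continuousAt.continuousWithinAt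
  have hgcont : ContinuousOn g (Set.Icc a b) :=
    fun x hx => (hderiv x hx).continuousAt.continuousWithinAt
  have hFcont : ContinuousOn F (Set.Icc a b) :=
    Complex.continuous_exp.comp_continuousOn
      (continuousOn_const.mul (Complex.continuous_ofReal.comp_continuousOn hgcont))
  have hmono : MonotoneOn g' (Set.Icc a b) := by
    apply StrictMonoOn.monotoneOn
    apply strictMonoOn_of_deriv_pos (convex_Icc a b) hg'cont
    intro x hx
    rw [interior_Icc] at hx
    have hx' : x ∈ Set.Icc a b := Set.Ioo_subset_Icc_self hx
    rw [(hderiv2 x hx').deriv]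
    exact lt_of_lt_of_le hρ (hlow x hx')
  -- sets
  set P : Set ℝ := {x ∈ Set.Icc a b | g' x ≤ -s} with hP_def
  set Q : Set ℝ := {x ∈ Set.Icc a b | s ≤ g' x} with hQ_def
  have hPcompact : IsCompact P := by
    apply isCompact_Icc.of_isClosed_subset
    · exact hg'cont.preimage_isClosed_of_isClosed isClosed_Icc isClosed_Iic
    · exact fun x hx => hx.1
  have hQcompact : IsCompact Q := by
    apply isCompact_Icc.of_isClosed_subset
    · exact hg'cont.preimage_isClosed_of_isClosed isClosed_Icc isClosed_Ici
    · exact fun x hx => hx.1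
  set u : ℝ := if hP : P.Nonempty then sSup P else a with hu_def
  set v : ℝ := if hQ : Q.Nonempty then sInf Q else b with hv_def
  have huP : ∀ hP : P.Nonempty, u = sSup P := fun hP => by rw [hu_def, dif_pos hP]
  have hvQ : ∀ hQ : Q.Nonempty, v = sInf Q := fun hQ => by rw [hv_def, dif_pos hQ]
  have humem : u ∈ Set.Icc a b := by
    by_cases hP : P.Nonempty
    · rw [huP hP]; exact (hPcompact.sSup_mem hP).1
    · rw [hu_def, dif_neg hP]; exact ⟨le_refl a, hab.le⟩
  have hvmem : v ∈ Set.Icc a b := by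
    by_cases hQ : Q.Nonempty
    · rw [hvQ hQ]; exact (hQcompact.sInf_mem hQ).1
    · rw [hv_def, dif_neg hQ]; exact ⟨hab.le, le_refl b⟩
  -- (A) : on [a,u] with P nonempty, g' ≤ -s
  have hA : ∀ hP : P.Nonempty, ∀ x ∈ Set.Icc a u, g' x ≤ -s := by
    intro hP x hx
    have huPmem : u ∈ P := by rw [huP hP]; exact hPcompact.sSup_mem hP
    have hxab : x ∈ Set.Icc a b := ⟨hx.1, le_trans hx.2 huPmem.1.2⟩
    calc g' x ≤ g' u := hmono hxab huPmem.1 hx.2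
      _ ≤ -s := huPmem.2
  have hB : ∀ hQ : Q.Nonempty, ∀ x ∈ Set.Icc v b, s ≤ g' x := by
    intro hQ x hx
    have hvQmem : v ∈ Q := by rw [hvQ hQ]; exact hQcompact.sInf_mem hQ
    have hxab : x ∈ Set.Icc a b := ⟨le_trans hvQmem.1.1 hx.1, hx.2⟩
    calc s ≤ g' v := hvQmem.2
      _ ≤ g' x := hmono hvQmem.1 hxab hx.1
  -- (C) : on (u,v), -s < g' < s
  have hC : ∀ x ∈ Set.Ioo u v, -s < g' x ∧ g' x < s := by
    intro x hx
    have hxab : x ∈ Set.Icc a b := ⟨le_trans humem.1 hx.1.le, le_trans hx.2.le hvmem.2⟩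
    constructor
    · by_contra h
      push_neg at h
      have hxP : x ∈ P := ⟨hxab, h⟩
      have : x ≤ u := by rw [huP ⟨x, hxP⟩]; exact le_csSup hPcompact.bddAbove hxP
      exact absurd this (not_le.mpr hx.1)
    · by_contra h
      push_neg at h
      have hxQ : x ∈ Q := ⟨hxab, h⟩
      have : v ≤ x := by rw [hvQ ⟨x, hxQ⟩]; exact csInf_le hQcompact.bddBelow hxQ
      exact absurd this (not_le.mpr hx.2)
  -- (D) u ≤ v
  have hD : u ≤ v := by
    by_cases hP : P.Nonempty
    · by_cases hQ : Q.Nonempty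
      · have huPmem : u ∈ P := by rw [huP hP]; exact hPcompact.sSup_mem hP
        have hvQmem : v ∈ Q := by rw [hvQ hQ]; exact hQcompact.sInf_mem hQ
        by_contra h
        push_neg at h
        have := hmono hvQmem.1 huPmem.1 h.le
        have h1 := huPmem.2
        have h2 := hvQmem.2
        linarith
      · rw [hv_def, dif_neg hQ]; exact humem.2
    · rw [hu_def, dif_neg hP]; exact hvmem.1
  -- (E) v - u ≤ 2 * s / ρ
  have hE : v - u ≤ 2 * s / ρ := by
    rcases eq_or_lt_of_le hD with heq | huv
    · rw [← heq]; simp; positivity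
    · have hIoosub : Set.Ioo u v ⊆ Set.Icc a b :=
        fun x hx => ⟨le_trans humem.1 hx.1.le, le_trans hx.2.le hvmem.2⟩
      have hIccsub : Set.Icc u v ⊆ Set.Icc a b :=
        fun x hx => ⟨le_trans humem.1 hx.1, le_trans hx.2 hvmem.2⟩
      have hg'u : -s ≤ g' u := by
        have hne : (nhdsWithin u (Set.Ioo u v)).NeBot := left_nhdsWithin_Ioo_neBot huv
        have htd : Filter.Tendsto g' (nhdsWithin u (Set.Ioo u v)) (nhds (g' u)) :=
          ((hderiv2 u humem).continuousAt.continuousWithinAt).mono (by intro x hx; exact hIoosub hx) |>.tendsto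
        exact ge_of_tendsto htd (Filter.eventually_of_mem self_mem_nhdsWithin
          fun x hx => (hC x hx).1.le)
      have hg'v : g' v ≤ s := by
        have hne : (nhdsWithin v (Set.Ioo u v)).NeBot := right_nhdsWithin_Ioo_neBot huv
        have htd : Filter.Tendsto g' (nhdsWithin v (Set.Ioo u v)) (nhds (g' v)) :=
          ((hderiv2 v hvmem).continuousAt.continuousWithinAt).mono (by intro x hx; exact hIoosub hx) |>.tendsto
        exact le_of_tendsto htd (Filter.eventually_of_mem self_mem_nhdsWithin
          fun x hx => (hC x hx).2.le)
      obtain ⟨t, ht, hslope⟩ := exists_hasDerivAt_eq_slope g' g'' huv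
        (hg'cont.mono hIccsub) (fun x hx => hderiv2 x (hIoosub hx))
      have htab : t ∈ Set.Icc a b := hIoosub ht
      have h1 : ρ ≤ (g' v - g' u) / (v - u) := hslope ▸ hlow t htab
      have h2 : g' v - g' u ≤ 2 * s := by linarith
      have h3 : ρ * (v - u) ≤ g' v - g' u := by
        rw [le_div_iff₀ (by linarith : 0 < v - u)] at h1; linarith
      rw [le_div_iff₀ hρ]
      nlinarith
  -- integrability on subintervals
  have hsubau : Set.uIcc a u ⊆ Set.Icc a b := by
    rw [Set.uIcc_of_le humem.1]; exact Set.Icc_subset_Icc (le_refl a) humem.2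
  have hsubuv : Set.uIcc u v ⊆ Set.Icc a b := by
    rw [Set.uIcc_of_le hD]; exact Set.Icc_subset_Icc humem.1 hvmem.2
  have hsubav : Set.uIcc a v ⊆ Set.Icc a b := by
    rw [Set.uIcc_of_le hvmem.1]; exact Set.Icc_subset_Icc (le_refl a) hvmem.2
  have hsubvb : Set.uIcc v b ⊆ Set.Icc a b := by
    rw [Set.uIcc_of_le hvmem.2]; exact Set.Icc_subset_Icc hvmem.1 (le_refl b)
  have hiau : IntervalIntegrable F volume a u := (hFcont.mono hsubau).intervalIntegrable
  have hiuv : IntervalIntegrable F volume u v := (hFcont.mono hsubuv).intervalIntegrable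
  have hiav : IntervalIntegrable F volume a v := (hFcont.mono hsubav).intervalIntegrable
  have hivb : IntervalIntegrable F volume v b := (hFcont.mono hsubvb).intervalIntegrable
  have e1 := intervalIntegral.integral_add_adjacent_intervals hiau hiuv
  have e2 := intervalIntegral.integral_add_adjacent_intervals hiav hivb
  have hsplit : (∫ x in a..b, F x)
      = (∫ x in a..u, F x) + (∫ x in u..v, F x) + (∫ x in v..b, F x) := by
    rw [← e2, ← e1]
  -- middle bound
  have hmid : ‖∫ x in u..v, F x‖ ≤ 2 * s / ρ := by
    have h1 : ‖∫ x in u..v, F x‖ ≤ 1 * |v - u| := by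
      apply intervalIntegral.norm_integral_le_of_norm_le_const
      intro x hx
      rw [hF_def]
      exact le_of_eq (sdt_norm_exp (g x))
    rw [one_mul, abs_of_nonneg (sub_nonneg.mpr hD)] at h1
    linarith
  -- right bound
  have hright : ‖∫ x in v..b, F x‖ ≤ 3 / (2 * Real.pi * s) := by
    by_cases hQ : Q.Nonempty
    · have hsub : Set.Icc v b ⊆ Set.Icc a b := Set.Icc_subset_Icc hvmem.1 (le_refl b)
      exact sdt_fdt v b hvmem.2 g g' g'' s hs
        (fun x hx => hderiv x (hsub hx)) (fun x hx => hderiv2 x (hsub hx))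
        (fun x hx => le_trans hρ.le (hlow x (hsub hx))) (hB hQ)
    · have hvb : v = b := by rw [hv_def, dif_neg hQ]
      rw [hvb, intervalIntegral.integral_same]
      simp
      positivity
  -- left bound
  have hleft : ‖∫ x in a..u, F x‖ ≤ 3 / (2 * Real.pi * s) := by
    by_cases hP : P.Nonempty
    · have hrefl0 := intervalIntegral.integral_comp_neg (a := -u) (b := -a) (f := F)
      simp only [neg_neg] at hrefl0
      rw [← hrefl0]
      have hmem : ∀ x ∈ Set.Icc (-u) (-a), -x ∈ Set.Icc a u := by
        intro x hx
        exact ⟨le_neg_of_le_neg hx.2, neg_le_of_neg_le hx.1⟩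
      have hsub : Set.Icc a u ⊆ Set.Icc a b := Set.Icc_subset_Icc (le_refl a) humem.2
      have hbound := sdt_fdt (-u) (-a) (neg_le_neg humem.1)
        (fun x => g (-x)) (fun x => -g' (-x)) (fun x => g'' (-x)) s hs
        (fun x hx => by
          have h := (hderiv (-x) (hsub (hmem x hx))).comp x (hasDerivAt_neg x)
          simpa [Function.comp_def, mul_comm] using h)
        (fun x hx => by
          have h := ((hderiv2 (-x) (hsub (hmem x hx))).comp x (hasDerivAt_neg x)).neg
          simpa [Function.comp_def, Pi.neg_def, mul_comm] using h)
        (fun x hx => le_trans hρ.le (hlow (-x) (hsub (hmem x hx))))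
        (fun x hx => by
          have := hA hP (-x) (hmem x hx)
          show s ≤ -g' (-x)
          linarith)
      simpa [hF_def] using hbound
    · have hua : u = a := by rw [hu_def, dif_neg hP]
      rw [hua, intervalIntegral.integral_same]
      simp
      positivity
  -- final numeric
  have hnum : 3 / (2 * Real.pi * s) + 2 * s / ρ + 3 / (2 * Real.pi * s) ≤ 4 / s := by
    have hmid2 : 2 * s / ρ = 2 / s := by
      rw [← hs2]; field_simp
    have key : 3 / (2 * Real.pi * s) ≤ 1 / s := by
      rw [div_le_div_iff₀ (by positivity) hs]
      nlinarith [Real.pi_gt_three]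
    have h4 : 1 / s + 2 / s + 1 / s = 4 / s := by ring
    linarith [key]
  calc ‖∫ x in a..b, Complex.exp (2 * Real.pi * Complex.I * (g x))‖
      = ‖(∫ x in a..u, F x) + (∫ x in u..v, F x) + (∫ x in v..b, F x)‖ := by
        rw [← hsplit, hF_def]
    _ ≤ ‖(∫ x in a..u, F x) + (∫ x in u..v, F x)‖ + ‖∫ x in v..b, F x‖ := norm_add_le _ _
    _ ≤ (‖∫ x in a..u, F x‖ + ‖∫ x in u..v, F x‖) + ‖∫ x in v..b, F x‖ := by
        gcongr; exact norm_add_le _ _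
    _ ≤ (3 / (2 * Real.pi * s) + 2 * s / ρ) + 3 / (2 * Real.pi * s) := by
        gcongr
    _ ≤ 4 / s := by linarith [hnum]
end
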